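/- arXiv:2209.01375 — 2 statements merged into one kernel-verified Lean document; each statement's English description precedes it below -/
import Mathlib

section
/- The function t ↦ ln Γ(1 + 1/t) defined on (0, +∞) is μ-weakly convex for any μ > 2·γ_E·(t₀ − 1)³, where γ_E is the Euler–Mascheroni constant and t₀ > 1 is the unique positive zero of the digamma function; i.e., t ↦ ln Γ(1 + 1/t) + (μ/2)t² is convex on (0, +∞). -/
/-- The digamma function `Dig = Γ'/Γ`. -/
noncomputable def Dig (x : ℝ) : ℝ := deriv Real.Gamma x / Real.Gamma x

open Real Set

set_option maxHeartbeats 800000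

lemma Dig.hasDerivAt_logGamma {x : ℝ} (hx : 0 < x) :
    HasDerivAt (fun y => Real.log (Real.Gamma y)) (Dig x) x := by
  have hne : ∀ m : ℕ, x ≠ -m := by
    intro m
    have : (0:ℝ) ≤ m := m.cast_nonneg
    intro h; rw [h] at hx; linarith
  have hΓ : HasDerivAt Real.Gamma (deriv Real.Gamma x) x :=
    (Real.differentiableAt_Gamma hne).hasDerivAt
  have hlog := (Real.hasDerivAt_log (Real.Gamma_pos_of_pos hx).ne').comp x hΓ
  simpa [Dig, Function.comp_def, div_eq_mul_inv, mul_comm] using hlog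

lemma Dig.monotoneOn : MonotoneOn Dig (Set.Ioi (0:ℝ)) := by
  have h := Real.convexOn_log_Gamma.monotoneOn_deriv (fun x hx =>
    (Dig.hasDerivAt_logGamma (hx : (0:ℝ) < x)).differentiableAt)
  intro a ha b hb hab
  have ha' := (Dig.hasDerivAt_logGamma (ha : (0:ℝ) < a)).deriv
  have hb' := (Dig.hasDerivAt_logGamma (hb : (0:ℝ) < b)).deriv
  have := h ha hb hab
  simp only [Function.comp_def] at this
  rw [ha', hb'] at this
  exact this

lemma Dig.one : Dig 1 = -Real.eulerMascheroniConstant := by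
  have := Real.hasDerivAt_Gamma_one.deriv
  rw [Dig, this, Real.Gamma_one, div_one]

lemma Dig.key_div {a b μ t₁ t₂ : ℝ} (ht1 : 0 < t₁) (ht2 : 0 < t₂)
    (h : 0 ≤ a * t₂ ^ 2 - b * t₁ ^ 2 + μ * (t₂ - t₁) * (t₁ ^ 2 * t₂ ^ 2)) :
    -a / t₁ ^ 2 + μ * t₁ ≤ -b / t₂ ^ 2 + μ * t₂ := by
  rw [← sub_nonneg]
  have he : (-b / t₂ ^ 2 + μ * t₂) - (-a / t₁ ^ 2 + μ * t₁)
      = (a * t₂ ^ 2 - b * t₁ ^ 2 + μ * (t₂ - t₁) * (t₁ ^ 2 * t₂ ^ 2)) / (t₁ ^ 2 * t₂ ^ 2) := by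
    field_simp
    ring
  rw [he]
  exact div_nonneg h (by positivity)

/-- The function `t ↦ ln Γ(1 + 1/t)` on `(0, +∞)` is `μ`-weakly convex for any
`μ > 2·γ_E·(t₀ − 1)³`, where `t₀ > 1` is the unique positive zero of the digamma
function: i.e. `t ↦ ln Γ(1 + 1/t) + (μ/2)t²` is convex on `(0, +∞)`. -/
theorem stmt0 (t₀ : ℝ) (ht₀ : 1 < t₀) (hzero : Dig t₀ = 0)
    (huniq : ∀ s : ℝ, 0 < s → Dig s = 0 → s = t₀)
    (μ : ℝ) (hμ : 2 * Real.eulerMascheroniConstant * (t₀ - 1) ^ 3 < μ) :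
    ConvexOn ℝ (Set.Ioi (0 : ℝ))
      (fun t => Real.log (Real.Gamma (1 + 1 / t)) + μ / 2 * t ^ 2) := by
  set γ := Real.eulerMascheroniConstant with hγdef
  have hγ : 0 < γ := lt_trans (by norm_num) Real.one_half_lt_eulerMascheroniConstant
  have hd : 0 < t₀ - 1 := by linarith
  have hμ0 : 0 < μ := lt_of_lt_of_le (by positivity) hμ.le
  -- basic facts about `1 + 1/t`
  have hmem : ∀ t : ℝ, 0 < t → (0:ℝ) < 1 + 1 / t := fun t ht => by positivity
  -- `Dig x ≥ -γ` for `x ≥ 1`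
  have hge : ∀ x : ℝ, 1 ≤ x → -γ ≤ Dig x := by
    intro x hx
    have := Dig.monotoneOn (by norm_num : (1:ℝ) ∈ Set.Ioi 0)
      (by simpa using lt_of_lt_of_le one_pos hx) hx
    rw [Dig.one] at this
    exact this
  have ht₀0 : (0:ℝ) < t₀ := by linarith
  -- sign facts
  have hnonneg : ∀ x : ℝ, t₀ ≤ x → 0 ≤ Dig x := by
    intro x hx
    have := Dig.monotoneOn (by simpa using ht₀0) (by simpa using lt_of_lt_of_le ht₀0 hx) hx
    rw [hzero] at this; exact this
  have hnonpos : ∀ x : ℝ, 0 < x → x ≤ t₀ → Dig x ≤ 0 := by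
    intro x hx0 hx
    have := Dig.monotoneOn (by simpa using hx0) (by simpa using ht₀0) hx
    rw [hzero] at this; exact this
  have hle_t₀ : ∀ x : ℝ, 0 < x → Dig x ≤ 0 → x ≤ t₀ := by
    intro x hx0 hx
    by_contra h
    push_neg at h
    have h1 : 0 ≤ Dig x := hnonneg x h.le
    have h2 : Dig x = 0 := le_antisymm hx h1
    have := huniq x hx0 h2
    linarith
  have hge_t₀ : ∀ x : ℝ, 0 < x → 0 ≤ Dig x → t₀ ≤ x := by
    intro x hx0 hx
    by_contra h
    push_neg at h
    have h1 : Dig x ≤ 0 := hnonpos x hx0 h.le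
    have h2 : Dig x = 0 := le_antisymm h1 hx
    have := huniq x hx0 h2
    linarith
  -- the derivative function
  set D : ℝ → ℝ := fun t => -Dig (1 + 1 / t) / t ^ 2 + μ * t with hDdef
  have hD : ∀ t : ℝ, 0 < t →
      HasDerivAt (fun t => Real.log (Real.Gamma (1 + 1 / t)) + μ / 2 * t ^ 2) (D t) t := by
    intro t ht
    have hu : HasDerivAt (fun t : ℝ => 1 + 1 / t) (-(t ^ 2)⁻¹) t := by
      simpa [one_div] using (hasDerivAt_inv ht.ne').const_add (1:ℝ)
    have hg := (Dig.hasDerivAt_logGamma (hmem t ht)).comp t hu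
    have hq : HasDerivAt (fun t : ℝ => μ / 2 * t ^ 2) (μ / 2 * (2 * t ^ 1)) t := by
      simpa using (hasDerivAt_pow 2 t).const_mul (μ / 2)
    have := hg.add hq
    convert this using 1
    show -Dig (1 + 1 / t) / t ^ 2 + μ * t = _
    ring
    all_goals rfl
  -- monotonicity of `D` on `(0, ∞)`: case A (right digamma value nonneg)
  have lemA : ∀ t₁ t₂ : ℝ, 0 < t₁ → t₁ ≤ t₂ → 0 ≤ Dig (1 + 1 / t₂) → D t₁ ≤ D t₂ := by
    intro t₁ t₂ ht1 h12 hb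
    have ht2 : 0 < t₂ := lt_of_lt_of_le ht1 h12
    have hba : Dig (1 + 1 / t₂) ≤ Dig (1 + 1 / t₁) := by
      apply Dig.monotoneOn (by simpa using hmem t₂ ht2) (by simpa using hmem t₁ ht1)
      have := one_div_le_one_div_of_le ht1 h12
      linarith
    apply Dig.key_div ht1 ht2
    set a := Dig (1 + 1 / t₁)
    set b := Dig (1 + 1 / t₂)
    have h1 : b * t₁ ^ 2 ≤ a * t₂ ^ 2 :=
      mul_le_mul hba (pow_le_pow_left₀ ht1.le h12 2) (by positivity) (hb.trans hba)
    nlinarith [mul_nonneg (mul_nonneg hμ0.le (sub_nonneg.2 h12)) (by positivity : (0:ℝ) ≤ t₁ ^ 2 * t₂ ^ 2)]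
  -- case B (left digamma value nonpos)
  have lemB : ∀ t₁ t₂ : ℝ, 0 < t₁ → t₁ ≤ t₂ → Dig (1 + 1 / t₁) ≤ 0 → D t₁ ≤ D t₂ := by
    intro t₁ t₂ ht1 h12 ha
    have ht2 : 0 < t₂ := lt_of_lt_of_le ht1 h12
    have hba : Dig (1 + 1 / t₂) ≤ Dig (1 + 1 / t₁) := by
      apply Dig.monotoneOn (by simpa using hmem t₂ ht2) (by simpa using hmem t₁ ht1)
      have := one_div_le_one_div_of_le ht1 h12
      linarith
    have haγ : -γ ≤ Dig (1 + 1 / t₁) := hge _ (by nlinarith [one_div_pos.2 ht1])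
    -- `1 + 1/t₁ ≤ t₀` hence `1 ≤ (t₀ - 1) * t₁` and `1 ≤ (t₀ - 1) * t₂`
    have hle : 1 + 1 / t₁ ≤ t₀ := hle_t₀ _ (hmem t₁ ht1) ha
    have hdt1 : 1 ≤ (t₀ - 1) * t₁ := by
      have h1 : 1 / t₁ ≤ t₀ - 1 := by linarith
      calc (1:ℝ) = (1 / t₁) * t₁ := by field_simp
        _ ≤ (t₀ - 1) * t₁ := by exact mul_le_mul_of_nonneg_right h1 ht1.le
    have hdt2 : 1 ≤ (t₀ - 1) * t₂ := le_trans hdt1 (mul_le_mul_of_nonneg_left h12 hd.le)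
    apply Dig.key_div ht1 ht2
    set a := Dig (1 + 1 / t₁)
    set b := Dig (1 + 1 / t₂)
    set dd := t₀ - 1 with hdd
    -- auxiliary bounds
    have e1 : (1:ℝ) ≤ (dd * t₁) ^ 2 := by nlinarith
    have e1' : (1:ℝ) ≤ (dd * t₂) ^ 2 := by nlinarith
    have e2 : (1:ℝ) ≤ (dd * t₁) ^ 2 * (dd * t₂) := by nlinarith [mul_pos hd ht2]
    have e2' : (1:ℝ) ≤ (dd * t₂) ^ 2 * (dd * t₁) := by nlinarith [mul_pos hd ht1]
    have haux1 : t₂ ≤ dd ^ 3 * t₁ ^ 2 * t₂ ^ 2 := by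
      nlinarith [mul_le_mul_of_nonneg_right e2 ht2.le]
    have haux2 : t₁ ≤ dd ^ 3 * t₁ ^ 2 * t₂ ^ 2 := by
      nlinarith [mul_le_mul_of_nonneg_right e2' ht1.le]
    have T1 : 0 ≤ (t₂ - t₁) * (t₁ ^ 2 * t₂ ^ 2) * (μ - 2 * γ * dd ^ 3) :=
      mul_nonneg (mul_nonneg (sub_nonneg.2 h12) (by positivity)) (by linarith)
    have T2 : 0 ≤ γ * (t₂ - t₁) * (2 * dd ^ 3 * t₁ ^ 2 * t₂ ^ 2 - t₂ - t₁) :=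
      mul_nonneg (mul_nonneg hγ.le (sub_nonneg.2 h12)) (by linarith)
    have T3 : 0 ≤ (γ + a) * (t₂ ^ 2 - t₁ ^ 2) :=
      mul_nonneg (by linarith) (by nlinarith)
    have T4 : 0 ≤ (a - b) * t₁ ^ 2 := mul_nonneg (by linarith) (by positivity)
    have key : a * t₂ ^ 2 - b * t₁ ^ 2 + μ * (t₂ - t₁) * (t₁ ^ 2 * t₂ ^ 2)
        = (t₂ - t₁) * (t₁ ^ 2 * t₂ ^ 2) * (μ - 2 * γ * dd ^ 3)
          + γ * (t₂ - t₁) * (2 * dd ^ 3 * t₁ ^ 2 * t₂ ^ 2 - t₂ - t₁)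
          + (γ + a) * (t₂ ^ 2 - t₁ ^ 2) + (a - b) * t₁ ^ 2 := by ring
    rw [key]
    linarith [T1, T2, T3, T4]
  have Dmono : MonotoneOn D (Set.Ioi (0:ℝ)) := by
    intro t₁ ht1 t₂ ht2 h12
    simp only [Set.mem_Ioi] at ht1 ht2
    by_cases hb : 0 ≤ Dig (1 + 1 / t₂)
    · exact lemA t₁ t₂ ht1 h12 hb
    · by_cases ha : Dig (1 + 1 / t₁) ≤ 0
      · exact lemB t₁ t₂ ht1 h12 ha
      · push_neg at hb ha
        -- intermediate point `T = 1/(t₀-1)`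
        set T := 1 / (t₀ - 1) with hT
        have hTpos : 0 < T := by positivity
        have hTval : 1 + 1 / T = t₀ := by rw [hT]; field_simp; ring
        have h1T : t₁ ≤ T := by
          have h1 : t₀ ≤ 1 + 1 / t₁ := hge_t₀ _ (by positivity) ha.le
          have h2 : t₀ - 1 ≤ 1 / t₁ := by linarith
          rw [hT, le_div_iff₀ hd]
          calc t₁ * (t₀ - 1) ≤ t₁ * (1 / t₁) := mul_le_mul_of_nonneg_left h2 ht1.le
            _ = 1 := by field_simp
        have hT2 : T ≤ t₂ := by
          have h1 : 1 + 1 / t₂ ≤ t₀ := hle_t₀ _ (by positivity) hb.le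
          have h2 : 1 / t₂ ≤ t₀ - 1 := by linarith
          rw [hT]
          rw [div_le_iff₀ hd]
          have := mul_le_mul_of_nonneg_left h2 (le_of_lt (lt_of_lt_of_le ht1 h12))
          calc (1:ℝ) = t₂ * (1 / t₂) := by field_simp
            _ ≤ t₂ * (t₀ - 1) := mul_le_mul_of_nonneg_left h2 (by linarith)
        have e1 : D t₁ ≤ D T := lemA t₁ T ht1 h1T (by rw [hTval, hzero])
        have e2 : D T ≤ D t₂ := lemB T t₂ hTpos hT2 (by rw [hTval, hzero])
        exact e1.trans e2
  -- conclude convexity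
  have hconv : Convex ℝ (Set.Ioi (0:ℝ)) := convex_Ioi 0
  apply MonotoneOn.convexOn_of_deriv hconv
  · exact fun t ht => (hD t ht).differentiableAt.continuousAt.continuousWithinAt
  · rw [interior_Ioi]
    exact fun t ht => (hD t ht).differentiableAt.differentiableWithinAt
  · rw [interior_Ioi]
    intro a ha b hb hab
    rw [(hD a ha).deriv, (hD b hb).deriv]
    exact Dmono ha hb hab
end

section
/- Let q: ℝᴺ → ℝ with ∇q L_q-Lipschitz on a bounded set S containing all iterates, f: ℝⁿ⁰ → ℝ with L_f-Lipschitz gradient, and suppose at iteration ℓ there exists τ₀ > 0 with ‖∇f(ζ₀^ℓ) + ∇₀q(ζ^{ℓ+1,1})‖ ≤ τ₀‖ζ₀^{ℓ+1} − ζ₀^ℓ‖. Then the vector s₀^{ℓ+1} = ∇f(ζ₀^{ℓ+1}) + ∇₀q(ζ^{ℓ+1}) satisfies ‖s₀^{ℓ+1}‖ ≤ (L_f + τ₀ + L_q)·‖ζ^{ℓ+1} − ζ^ℓ‖. -/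
/-- Inexact-optimality bound for the first block: if `∇q` is `L_q`-Lipschitz on a bounded
set `S` containing all iterates, `∇f` is `L_f`-Lipschitz, and at iteration `ℓ` one has
`‖∇f(ζ₀^ℓ) + ∇₀q(ζ^{ℓ+1,1})‖ ≤ τ₀‖ζ₀^{ℓ+1} − ζ₀^ℓ‖`, then
`s₀^{ℓ+1} = ∇f(ζ₀^{ℓ+1}) + ∇₀q(ζ^{ℓ+1})` satisfies
`‖s₀^{ℓ+1}‖ ≤ (L_f + τ₀ + L_q)·‖ζ^{ℓ+1} − ζ^ℓ‖`. Here the full space is the product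
of the first block space and the space of the remaining blocks. -/
theorem stmt14 {n₀ n₁ : ℕ}
    (q : EuclideanSpace ℝ (Fin n₀) × EuclideanSpace ℝ (Fin n₁) → ℝ)
    (f : EuclideanSpace ℝ (Fin n₀) → ℝ)
    (gf : EuclideanSpace ℝ (Fin n₀) → EuclideanSpace ℝ (Fin n₀))
    (g0 : EuclideanSpace ℝ (Fin n₀) × EuclideanSpace ℝ (Fin n₁) → EuclideanSpace ℝ (Fin n₀))
    (g1 : EuclideanSpace ℝ (Fin n₀) × EuclideanSpace ℝ (Fin n₁) → EuclideanSpace ℝ (Fin n₁))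
    (S : Set (EuclideanSpace ℝ (Fin n₀) × EuclideanSpace ℝ (Fin n₁)))
    (hSbdd : Bornology.IsBounded S)
    (Lf Lq τ₀ : ℝ) (hLf : 0 ≤ Lf) (hLq : 0 ≤ Lq) (hτ₀ : 0 < τ₀)
    -- `gf` is the gradient of `f`, `L_f`-Lipschitz
    (hgf : ∀ x, HasGradientAt f (gf x) x)
    (hgfLip : LipschitzWith (Real.toNNReal Lf) gf)
    -- `(g0, g1)` is the (blockwise) gradient of `q` on `S`, `L_q`-Lipschitz on `S`
    (hg0 : ∀ z ∈ S, HasGradientAt (fun x => q (x, z.2)) (g0 z) z.1)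
    (hg1 : ∀ z ∈ S, HasGradientAt (fun y => q (z.1, y)) (g1 z) z.2)
    (hgqLip : ∀ z ∈ S, ∀ w ∈ S,
      ‖((g0 z - g0 w, g1 z - g1 w) :
          EuclideanSpace ℝ (Fin n₀) × EuclideanSpace ℝ (Fin n₁))‖ ≤ Lq * ‖z - w‖)
    -- the iterates: `x = ζ₀^ℓ`, `x' = ζ₀^{ℓ+1}`, `yold`/`ynew` the remaining blocks
    (x x' : EuclideanSpace ℝ (Fin n₀)) (yold ynew : EuclideanSpace ℝ (Fin n₁))
    (hmem1 : (x, yold) ∈ S) (hmem2 : (x', yold) ∈ S) (hmem3 : (x', ynew) ∈ S)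
    -- inexact optimality at iteration ℓ
    (hinex : ‖gf x + g0 (x', yold)‖ ≤ τ₀ * ‖x' - x‖) :
    ‖gf x' + g0 (x', ynew)‖ ≤
      (Lf + τ₀ + Lq) *
        ‖((x', ynew) : EuclideanSpace ℝ (Fin n₀) × EuclideanSpace ℝ (Fin n₁)) - (x, yold)‖ := by
  set Z : EuclideanSpace ℝ (Fin n₀) × EuclideanSpace ℝ (Fin n₁) := (x', ynew) - (x, yold) with hZ
  have hxle : ‖x' - x‖ ≤ ‖Z‖ := le_max_left _ _
  have hyle : ‖ynew - yold‖ ≤ ‖Z‖ := le_max_right _ _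
  have hZnn : (0:ℝ) ≤ ‖Z‖ := norm_nonneg _
  have h1 : ‖gf x' - gf x‖ ≤ Lf * ‖x' - x‖ := by
    have := hgfLip.dist_le_mul x' x
    simpa [dist_eq_norm, Real.coe_toNNReal _ hLf] using this
  have h2 : ‖g0 (x', ynew) - g0 (x', yold)‖ ≤ Lq * ‖ynew - yold‖ := by
    have h := hgqLip (x', ynew) hmem3 (x', yold) hmem2
    have hle : ‖g0 (x', ynew) - g0 (x', yold)‖ ≤
        ‖((g0 (x', ynew) - g0 (x', yold), g1 (x', ynew) - g1 (x', yold)) :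
          EuclideanSpace ℝ (Fin n₀) × EuclideanSpace ℝ (Fin n₁))‖ := le_max_left _ _
    refine hle.trans (h.trans ?_)
    have : ‖((x', ynew) : EuclideanSpace ℝ (Fin n₀) × EuclideanSpace ℝ (Fin n₁)) - (x', yold)‖
        = ‖ynew - yold‖ := by
      simp [Prod.norm_def, Prod.sub_def]
    rw [this]
  have key : ‖gf x' + g0 (x', ynew)‖ ≤
      ‖gf x' - gf x‖ + ‖gf x + g0 (x', yold)‖ + ‖g0 (x', ynew) - g0 (x', yold)‖ := by
    have : gf x' + g0 (x', ynew) =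
        (gf x' - gf x) + (gf x + g0 (x', yold)) + (g0 (x', ynew) - g0 (x', yold)) := by abel
    rw [this]
    exact (norm_add_le _ _).trans (by gcongr; exact norm_add_le _ _)
  calc ‖gf x' + g0 (x', ynew)‖
      ≤ ‖gf x' - gf x‖ + ‖gf x + g0 (x', yold)‖ + ‖g0 (x', ynew) - g0 (x', yold)‖ := key
    _ ≤ Lf * ‖x' - x‖ + τ₀ * ‖x' - x‖ + Lq * ‖ynew - yold‖ := by gcongr
    _ ≤ Lf * ‖Z‖ + τ₀ * ‖Z‖ + Lq * ‖Z‖ := by gcongr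
    _ = (Lf + τ₀ + Lq) * ‖Z‖ := by ring
end
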